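/- Let r ≥ 2 with prime factorization r = ∏ᵢ pᵢ^{eᵢ} (τ(r) distinct primes). Then O(A_{U(r)}) ≅ ∏ᵢ O(A_{U(pᵢ^{eᵢ})}), and hence |O(A_{U(r)})| = 2^{τ(r)}·φ(r). -/

import Mathlib

/-- The group `O(A_{U(n)})` in matrix form: `2×2` matrices over `ℤ/n` in `GL₂` satisfying
`ad + bc = 1`, `ab = 0`, `cd = 0`. -/
def discIsomSet (n : ℕ) : Type :=
  {A : Matrix (Fin 2) (Fin 2) (ZMod n) //
    A 0 0 * A 1 1 + A 0 1 * A 1 0 = 1 ∧ A 0 0 * A 0 1 = 0 ∧ A 1 0 * A 1 1 = 0 ∧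
    IsUnit (A 0 0 * A 1 1 - A 0 1 * A 1 0)}

section Aux

/-- The defining predicate of `discIsomSet`, over a general commutative ring. -/
def discPred {R : Type} [CommRing R] (A : Matrix (Fin 2) (Fin 2) R) : Prop :=
  A 0 0 * A 1 1 + A 0 1 * A 1 0 = 1 ∧ A 0 0 * A 0 1 = 0 ∧ A 1 0 * A 1 1 = 0 ∧
    IsUnit (A 0 0 * A 1 1 - A 0 1 * A 1 0)

lemma pi_isUnit_iff {ι : Type} {R : ι → Type} [∀ i, CommRing (R i)] {x : ∀ i, R i} :
    IsUnit x ↔ ∀ i, IsUnit (x i) := by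
  constructor
  · rintro ⟨u, rfl⟩ i
    exact ⟨⟨u.val i, u.inv i, congrFun u.val_inv i, congrFun u.inv_val i⟩, rfl⟩
  · intro h
    choose y hy using fun i => isUnit_iff_exists_inv.mp (h i)
    exact isUnit_iff_exists_inv.mpr ⟨fun i => y i, funext hy⟩

lemma discPred_map {R S : Type} [CommRing R] [CommRing S] (f : R ≃+* S)
    {A : Matrix (Fin 2) (Fin 2) R} (h : discPred A) : discPred (A.map f) := by
  obtain ⟨h1, h2, h3, h4⟩ := h
  refine ⟨?_, ?_, ?_, ?_⟩
  · simp only [Matrix.map_apply, ← map_mul, ← map_add, h1, map_one]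
  · simp only [Matrix.map_apply, ← map_mul, h2, map_zero]
  · simp only [Matrix.map_apply, ← map_mul, h3, map_zero]
  · simp only [Matrix.map_apply, ← map_mul, ← map_sub]
    exact h4.map f

/-- Transfer of `discPred`-subtypes along a ring isomorphism. -/
def discSetCongr {R S : Type} [CommRing R] [CommRing S] (f : R ≃+* S) :
    {A : Matrix (Fin 2) (Fin 2) R // discPred A} ≃
      {A : Matrix (Fin 2) (Fin 2) S // discPred A} where
  toFun A := ⟨A.1.map f, discPred_map f A.2⟩
  invFun A := ⟨A.1.map f.symm, discPred_map f.symm A.2⟩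
  left_inv A := Subtype.ext <| by ext i j; simp [Matrix.map_apply]
  right_inv A := Subtype.ext <| by ext i j; simp [Matrix.map_apply]

/-- Componentwise decomposition of `discPred`-subtypes over a product ring. -/
def discSetPi {ι : Type} (R : ι → Type) [∀ i, CommRing (R i)] :
    {A : Matrix (Fin 2) (Fin 2) (∀ i, R i) // discPred A} ≃
      ∀ i, {A : Matrix (Fin 2) (Fin 2) (R i) // discPred A} where
  toFun A i := by
    refine ⟨fun j k => A.1 j k i, ?_, ?_, ?_, ?_⟩
    · simpa using congrFun A.2.1 i
    · simpa using congrFun A.2.2.1 i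
    · simpa using congrFun A.2.2.2.1 i
    · simpa using pi_isUnit_iff.mp A.2.2.2.2 i
  invFun g := by
    refine ⟨fun j k i => (g i).1 j k, ?_, ?_, ?_, ?_⟩
    · funext i; simpa using (g i).2.1
    · funext i; simpa using (g i).2.2.1
    · funext i; simpa using (g i).2.2.2.1
    · exact pi_isUnit_iff.mpr fun i => by simpa using (g i).2.2.2.2
  left_inv A := rfl
  right_inv g := rfl

/-- In `ZMod (p ^ e)` the only idempotents are `0` and `1`. -/
lemma zmod_idem {p e : ℕ} (hp : p.Prime) (he : e ≠ 0) (x : ZMod (p ^ e))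
    (hx : x * x = x) : x = 0 ∨ x = 1 := by
  haveI : NeZero (p ^ e) := ⟨pow_ne_zero _ hp.ne_zero⟩
  set n : ℤ := (x.val : ℤ) with hn
  have hxv : ((n : ℤ) : ZMod (p ^ e)) = x := by
    simp [hn, ZMod.natCast_val, ZMod.cast_id]
  have hcast : ((n * (n - 1) : ℤ) : ZMod (p ^ e)) = 0 := by
    push_cast
    rw [hxv]
    linear_combination hx
  have hdvd : ((p : ℤ)) ^ e ∣ n * (n - 1) := by
    have := (ZMod.intCast_zmod_eq_zero_iff_dvd _ _).mp hcast
    rwa [Nat.cast_pow] at this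
  have hp' : Prime (p : ℤ) := Nat.prime_iff_prime_int.mp hp
  have hcop : IsCoprime n (n - 1) := ⟨1, -1, by ring⟩
  have hpd : (p : ℤ) ∣ n * (n - 1) := (dvd_pow_self (p : ℤ) he).trans hdvd
  rcases hp'.dvd_mul.mp hpd with hd | hd
  · left
    have hc : IsCoprime ((p : ℤ) ^ e) (n - 1) :=
      (hcop.of_isCoprime_of_dvd_left hd).pow_left
    have : ((p : ℤ)) ^ e ∣ n := hc.dvd_of_dvd_mul_right hdvd
    rw [← hxv]
    rw [ZMod.intCast_zmod_eq_zero_iff_dvd]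
    rwa [Nat.cast_pow]
  · right
    have hc : IsCoprime ((p : ℤ) ^ e) n :=
      ((hcop.symm.of_isCoprime_of_dvd_left hd).pow_left)
    have hdn : ((p : ℤ)) ^ e ∣ n - 1 := hc.dvd_of_dvd_mul_left hdvd
    have h0 : ((n - 1 : ℤ) : ZMod (p ^ e)) = 0 := by
      rw [ZMod.intCast_zmod_eq_zero_iff_dvd, Nat.cast_pow]; exact hdn
    push_cast at h0
    rw [hxv] at h0
    exact sub_eq_zero.mp h0

/-- The structure of elements of `discIsomSet (p ^ e)`: diagonal or antidiagonal. -/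
lemma discIsom_cases {p e : ℕ} (hp : p.Prime) (he : e ≠ 0) (A : discIsomSet (p ^ e)) :
    (A.1 0 1 = 0 ∧ A.1 1 0 = 0 ∧ A.1 0 0 * A.1 1 1 = 1) ∨
      (A.1 0 0 = 0 ∧ A.1 1 1 = 0 ∧ A.1 0 1 * A.1 1 0 = 1) := by
  obtain ⟨h1, h2, h3, h4⟩ := A.2
  set a := A.1 0 0; set b := A.1 0 1; set c := A.1 1 0; set d := A.1 1 1
  have key : a * d * (b * c) = 0 := by
    rw [show a * d * (b * c) = (a * b) * (c * d) from by ring, h2, zero_mul]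
  have idem : (a * d) * (a * d) = a * d := by
    calc (a * d) * (a * d) = a * d * (a * d + b * c) - a * d * (b * c) := by ring
      _ = a * d := by rw [h1, key, mul_one, sub_zero]
  rcases zmod_idem hp he _ idem with h | h
  · right
    refine ⟨?_, ?_, ?_⟩
    · linear_combination (-a) * h1 + c * h2 + a * h
    · linear_combination (-d) * h1 + b * h3 + d * h
    · linear_combination h1 - h
  · left
    refine ⟨?_, ?_, ?_⟩
    · linear_combination d * h2 - b * h
    · linear_combination a * h3 - c * h
    · exact h

/-- Explicit parametrization of `discIsomSet (p ^ e)` by units and a boolean. -/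
noncomputable def primePowEquiv {p e : ℕ} (hp : p.Prime) (he : e ≠ 0) :
    ((ZMod (p ^ e))ˣ × Bool) ≃ discIsomSet (p ^ e) := by
  haveI : Fact (1 < p ^ e) := ⟨Nat.one_lt_pow he hp.one_lt⟩
  refine Equiv.ofBijective
    (fun ub => if ub.2 then
        ⟨!![0, (ub.1 : ZMod (p ^ e)); ((ub.1⁻¹ : _) : ZMod (p ^ e)), 0], by
          simp [discIsomSet]⟩
      else
        ⟨!![(ub.1 : ZMod (p ^ e)), 0; 0, ((ub.1⁻¹ : _) : ZMod (p ^ e))], by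
          simp [discIsomSet]⟩) ⟨?_, ?_⟩
  · rintro ⟨u, bu⟩ ⟨v, bv⟩ h
    cases bu <;> cases bv <;> simp only [if_true, if_false, Bool.false_eq_true] at h <;>
        have h00 := congrArg (fun X => X.1 0 0) h <;>
        have h01 := congrArg (fun X => X.1 0 1) h <;>
        simp only [↓reduceIte, Matrix.cons_val', Matrix.cons_val_zero, Matrix.cons_val_one,
          Matrix.head_cons, Matrix.head_fin_const, Matrix.cons_val_fin_one,
          Matrix.of_apply] at h00 h01
    · exact Prod.ext (Units.ext h00) rfl
    · exact absurd h00 u.ne_zero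
    · exact absurd h00.symm v.ne_zero
    · exact Prod.ext (Units.ext h01) rfl
  · rintro ⟨A, hA⟩
    rcases discIsom_cases hp he ⟨A, hA⟩ with ⟨hb, hc, had⟩ | ⟨ha, hd, hbc⟩
    · refine ⟨((IsUnit.of_mul_eq_one _ had).unit, false), ?_⟩
      apply Subtype.ext
      simp only [if_neg Bool.false_ne_true]
      have hu : ((IsUnit.of_mul_eq_one _ had).unit : ZMod (p ^ e)) = A 0 0 :=
        IsUnit.unit_spec _
      have hui : (((IsUnit.of_mul_eq_one _ had).unit⁻¹ : _) : ZMod (p ^ e)) = A 1 1 :=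
        Units.inv_eq_of_mul_eq_one_right (by rw [hu]; exact had)
      have hb' : A 0 1 = 0 := hb
      have hc' : A 1 0 = 0 := hc
      show (!![_, 0; 0, _] : Matrix (Fin 2) (Fin 2) (ZMod (p ^ e))) = A
      ext i j
      fin_cases i <;> fin_cases j <;> simp [hu, hui, hb', hc']
    · refine ⟨((IsUnit.of_mul_eq_one _ hbc).unit, true), ?_⟩
      apply Subtype.ext
      simp only [if_pos rfl]
      have hu : ((IsUnit.of_mul_eq_one _ hbc).unit : ZMod (p ^ e)) = A 0 1 :=
        IsUnit.unit_spec _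
      have hui : (((IsUnit.of_mul_eq_one _ hbc).unit⁻¹ : _) : ZMod (p ^ e)) = A 1 0 :=
        Units.inv_eq_of_mul_eq_one_right (by rw [hu]; exact hbc)
      have ha' : A 0 0 = 0 := ha
      have hd' : A 1 1 = 0 := hd
      show (!![0, _; _, 0] : Matrix (Fin 2) (Fin 2) (ZMod (p ^ e))) = A
      ext i j
      fin_cases i <;> fin_cases j <;> simp [hu, hui, ha', hd']

lemma card_primePow {p e : ℕ} (hp : p.Prime) (he : e ≠ 0) :
    Nat.card (discIsomSet (p ^ e)) = 2 * Nat.totient (p ^ e) := by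
  haveI : NeZero (p ^ e) := ⟨pow_ne_zero _ hp.ne_zero⟩
  rw [← Nat.card_congr (primePowEquiv hp he), Nat.card_prod,
    Nat.card_eq_fintype_card (α := (ZMod (p ^ e))ˣ), ZMod.card_units_eq_totient,
    Nat.card_eq_fintype_card (α := Bool), Fintype.card_bool, mul_comm]

end Aux

/-- Let `r ≥ 2` with `τ(r)` distinct prime factors.  Then
`O(A_{U(r)}) ≅ ∏ᵢ O(A_{U(pᵢ^{eᵢ})})` (via the Chinese Remainder Theorem applied
componentwise), and hence `|O(A_{U(r)})| = 2^{τ(r)}·φ(r)`. -/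
theorem stmt_14 (r : ℕ) (hr : 2 ≤ r) :
    Nonempty (discIsomSet r ≃
      ((p : r.primeFactors) → discIsomSet ((p : ℕ) ^ r.factorization (p : ℕ)))) ∧
    Nat.card (discIsomSet r) = 2 ^ r.primeFactors.card * Nat.totient r := by
  have hr0 : r ≠ 0 := by omega
  have hcop : Pairwise (Function.onFun Nat.Coprime fun p : r.primeFactors =>
      (p : ℕ) ^ r.factorization (p : ℕ)) := by
    intro p q hpq
    exact Nat.Coprime.pow _ _ <| (Nat.coprime_primes
      (Nat.prime_of_mem_primeFactors p.2) (Nat.prime_of_mem_primeFactors q.2)).mpr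
      (Subtype.coe_injective.ne hpq)
  have hprod : (∏ p : r.primeFactors, (p : ℕ) ^ r.factorization (p : ℕ)) = r := by
    exact (Finset.prod_coe_sort r.primeFactors
      (fun q => q ^ r.factorization q)).trans (Nat.factorization_prod_pow_eq_self hr0)
  let f : ZMod r ≃+* ∀ p : r.primeFactors, ZMod ((p : ℕ) ^ r.factorization (p : ℕ)) :=
    (ZMod.ringEquivCongr hprod.symm).trans (ZMod.prodEquivPi _ hcop)
  let E : discIsomSet r ≃
      ((p : r.primeFactors) → discIsomSet ((p : ℕ) ^ r.factorization (p : ℕ))) :=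
    (discSetCongr f).trans (discSetPi _)
  refine ⟨⟨E⟩, ?_⟩
  rw [Nat.card_congr E, Nat.card_pi]
  have hfe : ∀ p : r.primeFactors,
      Nat.card (discIsomSet ((p : ℕ) ^ r.factorization (p : ℕ))) =
        2 * Nat.totient ((p : ℕ) ^ r.factorization (p : ℕ)) := fun p =>
    card_primePow (Nat.prime_of_mem_primeFactors p.2) (Finsupp.mem_support_iff.mp p.2)
  rw [Finset.prod_congr rfl fun p _ => hfe p, Finset.prod_mul_distrib,
    Finset.prod_const, Finset.card_univ, Fintype.card_coe]
  have ht : Nat.totient r =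
      ∏ p : r.primeFactors, Nat.totient ((p : ℕ) ^ r.factorization (p : ℕ)) := by
    rw [Nat.multiplicative_factorization Nat.totient (fun x y h => Nat.totient_mul h)
      Nat.totient_one hr0]
    exact (Finset.prod_coe_sort r.primeFactors
      (fun q => Nat.totient (q ^ r.factorization q))).symm
  rw [ht]
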